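/- Let all items have size in (1/4, 1/2]; call items of size in (1/4,1/3] small. Suppose three small items S₁, S₂, S₃ arrive consecutively (in that order) in the input to Best-Fit. Then in the final Best-Fit packing, at least one of S₁, S₂, S₃ is packed in a bin containing three items, or in a bin containing exactly two small items. -/

import Mathlib

/-- The load of a bin, where a bin is a list of indices into the item list `I`. -/
def binLoad (I : List ℝ) (b : List ℕ) : ℝ := (b.map (fun i => I.getD i 0)).sum

/-- One step of Best-Fit on the instance `I`, with bins recorded as lists of item
indices: the item with index `t` is placed in a fullest feasible bin, and a new bin
is opened iff no existing bin can accommodate it. -/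
def BFStep (I : List ℝ) (bins : List (List ℕ)) (t : ℕ) (bins' : List (List ℕ)) : Prop :=
  (∃ i : ℕ, ∃ h : i < bins.length,
      binLoad I (bins[i]'h) + I.getD t 0 ≤ 1 ∧
      (∀ j : ℕ, ∀ hj : j < bins.length,
        binLoad I (bins[j]'hj) + I.getD t 0 ≤ 1 →
          binLoad I (bins[j]'hj) ≤ binLoad I (bins[i]'h)) ∧
      bins' = bins.set i (t :: (bins[i]'h)))
  ∨ ((∀ b ∈ bins, 1 < binLoad I b + I.getD t 0) ∧ bins' = bins ++ [[t]])

/-- `BFFrom I bins ts final`: Best-Fit, starting from the packing `bins`, processes the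
items of `I` with indices `ts` (in order) and ends with the packing `final`. -/
inductive BFFrom (I : List ℝ) : List (List ℕ) → List ℕ → List (List ℕ) → Prop
  | nil (bins : List (List ℕ)) : BFFrom I bins [] bins
  | cons {bins bins' final : List (List ℕ)} {t : ℕ} {ts : List ℕ} :
      BFStep I bins t bins' → BFFrom I bins' ts final → BFFrom I bins (t :: ts) final

namespace BFT

variable {I : List ℝ}

lemma binLoad_cons (t : ℕ) (b : List ℕ) :
    binLoad I (t :: b) = I.getD t 0 + binLoad I b := by simp [binLoad]

lemma binLoad_singleton (t : ℕ) : binLoad I [t] = I.getD t 0 := by simp [binLoad]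

lemma size_bounds (hI : ∀ x ∈ I, 1/4 < x ∧ x ≤ 1/2) {i : ℕ} (hi : i < I.length) :
    1/4 < I.getD i 0 ∧ I.getD i 0 ≤ 1/2 := by
  rw [List.getD_eq_getElem?_getD, List.getElem?_eq_getElem hi]
  exact hI _ (List.getElem_mem hi)

lemma load_lb (b : List ℕ) (hb : ∀ i ∈ b, 1/4 < I.getD i 0) :
    (b.length : ℝ) / 4 ≤ binLoad I b := by
  induction b with
  | nil => simp [binLoad]
  | cons a l ih =>
    have h1 := hb a (by simp)
    have h2 := ih (fun i hi => hb i (by simp [hi]))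
    rw [binLoad_cons]
    push_cast [List.length_cons]
    linarith

lemma load_lb' (b : List ℕ) (hb : ∀ i ∈ b, 1/4 < I.getD i 0) (hne : b ≠ []) :
    (b.length : ℝ) / 4 < binLoad I b := by
  cases b with
  | nil => exact absurd rfl hne
  | cons a l =>
    have h1 := hb a (by simp)
    have h2 := load_lb l (fun i hi => hb i (by simp [hi]))
    rw [binLoad_cons]
    push_cast [List.length_cons]
    linarith

lemma length_le_three (b : List ℕ) (hb : ∀ i ∈ b, 1/4 < I.getD i 0)
    (hl : binLoad I b ≤ 1) : b.length ≤ 3 := by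
  by_contra h
  push_neg at h
  have hne : b ≠ [] := by rintro rfl; simp at h
  have := load_lb' b hb hne
  have h4 : 4 ≤ b.length := h
  have h4' : (4 : ℝ) ≤ (b.length : ℝ) := by exact_mod_cast h4
  linarith

lemma length_le_two (b : List ℕ) (hb : ∀ i ∈ b, 1/4 < I.getD i 0)
    {s : ℝ} (hs : 1/4 < s) (hl : binLoad I b + s ≤ 1) : b.length ≤ 2 := by
  by_contra h
  push_neg at h
  have := load_lb b hb
  have h3 : 3 ≤ b.length := h
  have h3' : (3 : ℝ) ≤ (b.length : ℝ) := by exact_mod_cast h3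
  linarith

def Inv (I : List ℝ) (bins : List (List ℕ)) : Prop :=
  (∀ b ∈ bins, binLoad I b ≤ 1) ∧
  (∀ b ∈ bins, b ≠ []) ∧
  (∀ b ∈ bins, ∀ i ∈ b, i < I.length) ∧
  (∀ j k : ℕ, ∀ hj : j < bins.length, ∀ hk : k < bins.length,
     (bins[j]'hj).length = 1 → (bins[k]'hk).length = 1 → j = k)

lemma no_one_bin (hI : ∀ x ∈ I, 1/4 < x ∧ x ≤ 1/2) {bins : List (List ℕ)} {t : ℕ}
    (ht : t < I.length) (hidx : ∀ b ∈ bins, ∀ i ∈ b, i < I.length)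
    (hnew : ∀ b ∈ bins, 1 < binLoad I b + I.getD t 0) :
    ∀ b ∈ bins, b.length ≠ 1 := by
  intro b hb hlen
  obtain ⟨x, rfl⟩ := List.length_eq_one_iff.mp hlen
  have hx := size_bounds hI (hidx _ hb x (by simp))
  have htt := size_bounds hI ht
  have := hnew _ hb
  rw [binLoad_cons] at this
  have h0 : binLoad I ([] : List ℕ) = 0 := rfl
  rw [h0] at this
  linarith [hx.2, htt.2]

lemma inv_step (hI : ∀ x ∈ I, 1/4 < x ∧ x ≤ 1/2) {bins bins' : List (List ℕ)} {t : ℕ}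
    (ht : t < I.length) (hstep : BFStep I bins t bins') (hinv : Inv I bins) :
    Inv I bins' := by
  obtain ⟨h1, h2, h3, h4⟩ := hinv
  rcases hstep with ⟨i, hi, hfit, -, rfl⟩ | ⟨hnew, rfl⟩
  · refine ⟨?_, ?_, ?_, ?_⟩
    · intro b hb
      rcases List.mem_or_eq_of_mem_set hb with h | rfl
      · exact h1 _ h
      · rw [binLoad_cons]; linarith
    · intro b hb
      rcases List.mem_or_eq_of_mem_set hb with h | rfl
      · exact h2 _ h
      · simp
    · intro b hb j hj
      rcases List.mem_or_eq_of_mem_set hb with h | rfl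
      · exact h3 _ h j hj
      · rcases List.mem_cons.mp hj with rfl | h
        · exact ht
        · exact h3 _ (List.getElem_mem hi) j h
    · intro j k hj hk hlj hlk
      have hj' : j < bins.length := by simpa using hj
      have hk' : k < bins.length := by simpa using hk
      have hne : (bins[i]'hi) ≠ [] := h2 _ (List.getElem_mem hi)
      have hilen : 1 ≤ (bins[i]'hi).length := List.length_pos_iff.mpr hne
      rw [List.getElem_set] at hlj hlk
      by_cases hij : i = j
      · subst hij
        rw [if_pos rfl, List.length_cons] at hlj
        omega
      · by_cases hik : i = k
        · subst hik
          rw [if_pos rfl, List.length_cons] at hlk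
          omega
        · rw [if_neg hij] at hlj; rw [if_neg hik] at hlk
          exact h4 j k hj' hk' hlj hlk
  · have hno1 := no_one_bin hI ht h3 hnew
    refine ⟨?_, ?_, ?_, ?_⟩
    · intro b hb
      rcases List.mem_append.mp hb with h | h
      · exact h1 _ h
      · simp at h; subst h
        have := size_bounds hI ht
        rw [binLoad_cons]
        have h0 : binLoad I ([] : List ℕ) = 0 := rfl
        rw [h0]; linarith [this.2]
    · intro b hb
      rcases List.mem_append.mp hb with h | h
      · exact h2 _ h
      · simp at h; subst h; simp
    · intro b hb j hj
      rcases List.mem_append.mp hb with h | h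
      · exact h3 _ h j hj
      · simp at h; subst h; simp at hj; subst hj; exact ht
    · intro j k hj hk hlj hlk
      have hjlt : j < bins.length + 1 := by simpa using hj
      have hklt : k < bins.length + 1 := by simpa using hk
      have hjb : j = bins.length := by
        by_contra hne
        have hjlt' : j < bins.length := by omega
        rw [List.getElem_append] at hlj
        rw [dif_pos hjlt'] at hlj
        exact hno1 _ (List.getElem_mem hjlt') hlj
      have hkb : k = bins.length := by
        by_contra hne
        have hklt' : k < bins.length := by omega
        rw [List.getElem_append] at hlk
        rw [dif_pos hklt'] at hlk
        exact hno1 _ (List.getElem_mem hklt') hlk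
      omega

lemma inv_from (hI : ∀ x ∈ I, 1/4 < x ∧ x ≤ 1/2) {bins ts final : _}
    (h : BFFrom I bins ts final) (hts : ∀ t ∈ ts, t < I.length) (hinv : Inv I bins) :
    Inv I final := by
  induction h with
  | nil => exact hinv
  | cons hstep _ ih =>
    exact ih (fun t' ht' => hts t' (by simp [ht']))
      (inv_step hI (hts _ (by simp)) hstep hinv)

lemma bf_append {bins final : List (List ℕ)} {ts1 ts2 : List ℕ}
    (h : BFFrom I bins (ts1 ++ ts2) final) :
    ∃ mid, BFFrom I bins ts1 mid ∧ BFFrom I mid ts2 final := by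
  induction ts1 generalizing bins with
  | nil => exact ⟨bins, .nil _, h⟩
  | cons t ts ih =>
    cases h with
    | cons hstep hrest =>
      obtain ⟨m, hm1, hm2⟩ := ih hrest
      exact ⟨m, .cons hstep hm1, hm2⟩

lemma bf_extend {bins ts final : _} (h : BFFrom I bins ts final) :
    ∀ i, ∀ hi : i < bins.length,
      ∃ l, ∃ hj : i < final.length, final[i]'hj = l ++ bins[i]'hi := by
  induction h with
  | nil => intro i hi; exact ⟨[], hi, rfl⟩
  | @cons bins bins' final t ts hstep _ ih =>
    intro i hi
    rcases hstep with ⟨i0, h0, -, -, rfl⟩ | ⟨-, rfl⟩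
    · have hi' : i < (bins.set i0 (t :: bins[i0]'h0)).length := by simpa using hi
      obtain ⟨l, hj, hl⟩ := ih i hi'
      by_cases hii : i0 = i
      · subst hii
        refine ⟨l ++ [t], hj, ?_⟩
        rw [hl, List.getElem_set_self, List.append_assoc]
        simp
      · refine ⟨l, hj, ?_⟩
        rw [hl, List.getElem_set, if_neg hii]
    · have hi' : i < (bins ++ [[t]]).length := by simp; omega
      obtain ⟨l, hj, hl⟩ := ih i hi'
      refine ⟨l, hj, ?_⟩
      rw [hl, List.getElem_append, dif_pos hi]

lemma fin (hI : ∀ x ∈ I, 1/4 < x ∧ x ≤ 1/2) {bs ts final : _}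
    (h : BFFrom I bs ts final) (hts : ∀ t ∈ ts, t < I.length) (hinv : Inv I bs)
    {i q : ℕ} (hi : i < bs.length) (hq : q ∈ bs[i]'hi)
    (hc : (bs[i]'hi).length = 3 ∨
          ((bs[i]'hi).length = 2 ∧ ∀ j ∈ bs[i]'hi, I.getD j 0 ≤ 1/3)) :
    ∃ b ∈ final, q ∈ b ∧
      (b.length = 3 ∨ (b.length = 2 ∧ ∀ j ∈ b, I.getD j 0 ≤ 1/3)) := by
  obtain ⟨l, hj, hl⟩ := bf_extend h i hi
  obtain ⟨f1, f2, f3, -⟩ := inv_from hI h hts hinv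
  have hbmem : final[i]'hj ∈ final := List.getElem_mem hj
  have hlen3 : (final[i]'hj).length ≤ 3 :=
    length_le_three _ (fun j' hjj => (size_bounds hI (f3 _ hbmem j' hjj)).1) (f1 _ hbmem)
  refine ⟨final[i]'hj, hbmem, ?_, ?_⟩
  · rw [hl]; exact List.mem_append_right _ hq
  rcases hc with h3 | ⟨h2, hsm⟩
  · left
    rw [hl] at hlen3 ⊢
    rw [List.length_append, h3] at hlen3 ⊢
    omega
  · rw [hl] at hlen3 ⊢
    rw [List.length_append, h2] at hlen3
    rcases l with _ | ⟨x, l'⟩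
    · right
      refine ⟨by simpa using h2, ?_⟩
      intro j' hj'
      exact hsm j' (by simpa using hj')
    · left
      have hl' : l' = [] := by
        rw [List.length_cons] at hlen3
        exact List.length_eq_zero_iff.mp (by omega)
      subst hl'
      simp [h2]

end BFT

/-- If all items are in (1/4,1/2] and three small items (sizes in (1/4,1/3]) arrive
consecutively, then in the final Best-Fit packing at least one of them lies in a
3-item bin or in a bin containing exactly two small items. -/
theorem bf_triplet (I : List ℝ)
    (hI : ∀ x ∈ I, 1 / 4 < x ∧ x ≤ 1 / 2)
    (p : ℕ) (hp : p + 2 < I.length)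
    (hsmall : ∀ q ∈ [p, p + 1, p + 2], I.getD q 0 ≤ 1 / 3)
    (bins : List (List ℕ)) (hbf : BFFrom I [] (List.range I.length) bins) :
    ∃ b ∈ bins, (p ∈ b ∨ p + 1 ∈ b ∨ p + 2 ∈ b) ∧
      (b.length = 3 ∨ (b.length = 2 ∧ ∀ i ∈ b, I.getD i 0 ≤ 1 / 3)) := by
  have hp0 : p < I.length := by omega
  have hp1 : p + 1 < I.length := by omega
  have hp2 : p + 2 < I.length := by omega
  have hsp : I.getD p 0 ≤ 1/3 := hsmall p (by simp)
  have hsp1 : I.getD (p+1) 0 ≤ 1/3 := hsmall (p+1) (by simp)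
  have hsp2 : I.getD (p+2) 0 ≤ 1/3 := hsmall (p+2) (by simp)
  have hgp := BFT.size_bounds hI hp0
  have hgp1 := BFT.size_bounds hI hp1
  have hgp2 := BFT.size_bounds hI hp2
  obtain ⟨rest, hEq⟩ : ∃ rest, List.range I.length
      = List.range p ++ p :: (p+1) :: (p+2) :: rest := by
    refine ⟨(List.range (I.length - (p+3))).map (fun x => (p+3) + x), ?_⟩
    have h1 : List.range I.length
        = List.range (p+3) ++ (List.range (I.length - (p+3))).map (fun x => (p+3) + x) := by
      conv_lhs => rw [show I.length = (p+3) + (I.length - (p+3)) from by omega]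
      rw [List.range_add]
    have h2 : List.range (p+3) = List.range p ++ [p, p+1, p+2] := by
      rw [show p+3 = (p+2)+1 from rfl, List.range_succ,
          show p+2 = (p+1)+1 from rfl, List.range_succ, List.range_succ]
      simp
    rw [h1, h2]
    simp
  have hrest : ∀ t ∈ rest, t < I.length := by
    intro t htm
    have : t ∈ List.range I.length := by rw [hEq]; simp [htm]
    simpa using this
  have hts1 : ∀ t ∈ (p+1) :: (p+2) :: rest, t < I.length := by
    intro t htm
    simp at htm
    rcases htm with rfl | rfl | h
    · omega
    · omega
    · exact hrest _ h
  have hts2 : ∀ t ∈ (p+2) :: rest, t < I.length := by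
    intro t htm
    simp at htm
    rcases htm with rfl | h
    · omega
    · exact hrest _ h
  rw [hEq] at hbf
  obtain ⟨bins0, hbf0, hbf1⟩ := BFT.bf_append hbf
  have hinv0 : BFT.Inv I bins0 := by
    refine BFT.inv_from hI hbf0 (fun t ht => ?_) ⟨by simp, by simp, by simp, ?_⟩
    · have := List.mem_range.mp ht; omega
    · intro j k hj; simp at hj
  cases hbf1 with
  | cons hstep1 hbf2 =>
  rename_i bins1
  cases hbf2 with
  | cons hstep2 hbf3 =>
  rename_i bins2
  cases hbf3 with
  | cons hstep3 hbf4 =>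
  rename_i bins3
  have hinv1 : BFT.Inv I bins1 := BFT.inv_step hI hp0 hstep1 hinv0
  have hinv2 : BFT.Inv I bins2 := BFT.inv_step hI hp1 hstep2 hinv1
  have hinv3 : BFT.Inv I bins3 := BFT.inv_step hI hp2 hstep3 hinv2
  have hfrom1 : BFFrom I bins1 ((p+1) :: (p+2) :: rest) bins := .cons hstep2 (.cons hstep3 hbf4)
  have hfrom2 : BFFrom I bins2 ((p+2) :: rest) bins := .cons hstep3 hbf4
  rcases hstep1 with ⟨i, hi, hfit1, -, rfl⟩ | ⟨hnew1, rfl⟩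
  · -- p placed into existing bin i
    have hne_i : bins0[i]'hi ≠ [] := hinv0.2.1 _ (List.getElem_mem hi)
    have hidx_i : ∀ j ∈ bins0[i]'hi, j < I.length := hinv0.2.2.1 _ (List.getElem_mem hi)
    have hlen_le : (bins0[i]'hi).length ≤ 2 :=
      BFT.length_le_two _ (fun j hj => (BFT.size_bounds hI (hidx_i j hj)).1) hgp.1 hfit1
    have hlen_pos : 1 ≤ (bins0[i]'hi).length := List.length_pos_iff.mpr hne_i
    rcases (by omega : (bins0[i]'hi).length = 1 ∨ (bins0[i]'hi).length = 2) with hL | hL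
    · -- p joins a 1-bin [x]
      obtain ⟨x, hx⟩ := List.length_eq_one_iff.mp hL
      have hxlt : x < I.length := hidx_i x (by rw [hx]; simp)
      by_cases hxs : I.getD x 0 ≤ 1/3
      · -- x is small : SS-bin [p, x]
        have hi' : i < (bins0.set i (p :: bins0[i]'hi)).length := by simpa using hi
        obtain ⟨b, hb, hqb, hcb⟩ := BFT.fin hI hfrom1 hts1 hinv1 hi'
          (q := p) (by rw [List.getElem_set_self]; exact List.mem_cons_self)
          (Or.inr ⟨by rw [List.getElem_set_self, List.length_cons, hL],
            by
              rw [List.getElem_set_self, hx]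
              intro j hj
              simp at hj
              rcases hj with rfl | rfl
              · exact hsp
              · exact hxs⟩)
        exact ⟨b, hb, Or.inl hqb, hcb⟩
      · -- x is large : bins1 has no 1-bin
        have hno1 : ∀ j : ℕ, ∀ hj : j < (bins0.set i (p :: bins0[i]'hi)).length,
            ((bins0.set i (p :: bins0[i]'hi))[j]'hj).length ≠ 1 := by
          intro j hj hcon
          have hj' : j < bins0.length := by simpa using hj
          rw [List.getElem_set] at hcon
          by_cases hij : i = j
          · rw [if_pos hij, List.length_cons] at hcon; omega
          · rw [if_neg hij] at hcon
            exact hij (hinv0.2.2.2 i j hi hj' hL hcon)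
        clear hfrom1
        rcases hstep2 with ⟨i2, hi2, hfit2, -, rfl⟩ | ⟨hnew2, rfl⟩
        · -- p+1 placed into existing bin i2 : must be a 2-bin → 3-bin
          have hne2 : (bins0.set i (p :: bins0[i]'hi))[i2]'hi2 ≠ [] :=
            hinv1.2.1 _ (List.getElem_mem hi2)
          have hidx2 : ∀ j ∈ (bins0.set i (p :: bins0[i]'hi))[i2]'hi2, j < I.length :=
            hinv1.2.2.1 _ (List.getElem_mem hi2)
          have hlen2 : ((bins0.set i (p :: bins0[i]'hi))[i2]'hi2).length ≤ 2 :=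
            BFT.length_le_two _ (fun j hj => (BFT.size_bounds hI (hidx2 j hj)).1) hgp1.1 hfit2
          have hpos2 : 1 ≤ ((bins0.set i (p :: bins0[i]'hi))[i2]'hi2).length :=
            List.length_pos_iff.mpr hne2
          have hL2 : ((bins0.set i (p :: bins0[i]'hi))[i2]'hi2).length = 2 := by
            have := hno1 i2 hi2; omega
          have hi2' : i2 < ((bins0.set i (p :: bins0[i]'hi)).set i2
              ((p+1) :: (bins0.set i (p :: bins0[i]'hi))[i2]'hi2)).length := by simpa using hi2
          obtain ⟨b, hb, hqb, hcb⟩ := BFT.fin hI hfrom2 hts2 hinv2 hi2'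
            (q := p+1) (by rw [List.getElem_set_self]; exact List.mem_cons_self)
            (Or.inl (by rw [List.getElem_set_self, List.length_cons, hL2]))
          exact ⟨b, hb, Or.inr (Or.inl hqb), hcb⟩
        · -- p+1 opens a new bin; then p+2 must close it or join a 2-bin
          clear hfrom2
          set B1 := bins0.set i (p :: bins0[i]'hi) with hB1
          rcases hstep3 with ⟨i3, hi3, hfit3, -, rfl⟩ | ⟨hnew3, rfl⟩
          · have hne3 : (B1 ++ [[p+1]])[i3]'hi3 ≠ [] := hinv2.2.1 _ (List.getElem_mem hi3)
            have hidx3 : ∀ j ∈ (B1 ++ [[p+1]])[i3]'hi3, j < I.length :=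
              hinv2.2.2.1 _ (List.getElem_mem hi3)
            have hlen3 : ((B1 ++ [[p+1]])[i3]'hi3).length ≤ 2 :=
              BFT.length_le_two _ (fun j hj => (BFT.size_bounds hI (hidx3 j hj)).1) hgp2.1 hfit3
            have hpos3 : 1 ≤ ((B1 ++ [[p+1]])[i3]'hi3).length := List.length_pos_iff.mpr hne3
            rcases (by omega : ((B1 ++ [[p+1]])[i3]'hi3).length = 1 ∨
                ((B1 ++ [[p+1]])[i3]'hi3).length = 2) with hL3 | hL3
            · -- p+2 joins the 1-bin, which must be [p+1]
              have hi3eq : (B1 ++ [[p+1]])[i3]'hi3 = [p+1] := by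
                rw [List.getElem_append] at hL3 ⊢
                by_cases h3lt : i3 < B1.length
                · rw [dif_pos h3lt] at hL3
                  exact absurd hL3 (hno1 i3 h3lt)
                · rw [dif_neg h3lt]
                  simp
              have hi3' : i3 < ((B1 ++ [[p+1]]).set i3
                  ((p+2) :: (B1 ++ [[p+1]])[i3]'hi3)).length := by simpa using hi3
              obtain ⟨b, hb, hqb, hcb⟩ := BFT.fin hI hbf4 hrest hinv3 hi3'
                (q := p+2) (by rw [List.getElem_set_self]; exact List.mem_cons_self)
                (Or.inr ⟨by rw [List.getElem_set_self, List.length_cons, hL3],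
                  by
                    rw [List.getElem_set_self, hi3eq]
                    intro j hj
                    simp at hj
                    rcases hj with rfl | rfl
                    · exact hsp2
                    · exact hsp1⟩)
              exact ⟨b, hb, Or.inr (Or.inr hqb), hcb⟩
            · -- p+2 joins a 2-bin → 3-bin
              have hi3' : i3 < ((B1 ++ [[p+1]]).set i3
                  ((p+2) :: (B1 ++ [[p+1]])[i3]'hi3)).length := by simpa using hi3
              obtain ⟨b, hb, hqb, hcb⟩ := BFT.fin hI hbf4 hrest hinv3 hi3'
                (q := p+2) (by rw [List.getElem_set_self]; exact List.mem_cons_self)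
                (Or.inl (by rw [List.getElem_set_self, List.length_cons, hL3]))
              exact ⟨b, hb, Or.inr (Or.inr hqb), hcb⟩
          · -- p+2 opens a new bin: impossible, it fits with [p+1]
            exfalso
            have hmem : [p+1] ∈ B1 ++ [[p+1]] := List.mem_append_right _ (by simp)
            have := hnew3 _ hmem
            rw [BFT.binLoad_singleton] at this
            linarith
    · -- p joins a 2-bin → 3-bin
      have hi' : i < (bins0.set i (p :: bins0[i]'hi)).length := by simpa using hi
      obtain ⟨b, hb, hqb, hcb⟩ := BFT.fin hI hfrom1 hts1 hinv1 hi'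
        (q := p) (by rw [List.getElem_set_self]; exact List.mem_cons_self)
        (Or.inl (by rw [List.getElem_set_self, List.length_cons, hL]))
      exact ⟨b, hb, Or.inl hqb, hcb⟩
  · -- p opens a new bin
    have hno1_0 : ∀ b ∈ bins0, b.length ≠ 1 := BFT.no_one_bin hI hp0 hinv0.2.2.1 hnew1
    clear hfrom1
    rcases hstep2 with ⟨i2, hi2, hfit2, -, rfl⟩ | ⟨hnew2, rfl⟩
    · -- p+1 placed into an existing bin
      have hne2 : (bins0 ++ [[p]])[i2]'hi2 ≠ [] := hinv1.2.1 _ (List.getElem_mem hi2)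
      have hidx2 : ∀ j ∈ (bins0 ++ [[p]])[i2]'hi2, j < I.length :=
        hinv1.2.2.1 _ (List.getElem_mem hi2)
      have hlen2 : ((bins0 ++ [[p]])[i2]'hi2).length ≤ 2 :=
        BFT.length_le_two _ (fun j hj => (BFT.size_bounds hI (hidx2 j hj)).1) hgp1.1 hfit2
      have hpos2 : 1 ≤ ((bins0 ++ [[p]])[i2]'hi2).length := List.length_pos_iff.mpr hne2
      rcases (by omega : ((bins0 ++ [[p]])[i2]'hi2).length = 1 ∨
          ((bins0 ++ [[p]])[i2]'hi2).length = 2) with hL2 | hL2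
      · -- p+1 joins the 1-bin, which must be [p]
        have hi2eq : (bins0 ++ [[p]])[i2]'hi2 = [p] := by
          rw [List.getElem_append] at hL2 ⊢
          by_cases h2lt : i2 < bins0.length
          · rw [dif_pos h2lt] at hL2
            exact absurd hL2 (hno1_0 _ (List.getElem_mem h2lt))
          · rw [dif_neg h2lt]
            simp
        have hi2' : i2 < ((bins0 ++ [[p]]).set i2
            ((p+1) :: (bins0 ++ [[p]])[i2]'hi2)).length := by simpa using hi2
        obtain ⟨b, hb, hqb, hcb⟩ := BFT.fin hI hfrom2 hts2 hinv2 hi2'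
          (q := p+1) (by rw [List.getElem_set_self]; exact List.mem_cons_self)
          (Or.inr ⟨by rw [List.getElem_set_self, List.length_cons, hL2],
            by
              rw [List.getElem_set_self, hi2eq]
              intro j hj
              simp at hj
              rcases hj with rfl | rfl
              · exact hsp1
              · exact hsp⟩)
        exact ⟨b, hb, Or.inr (Or.inl hqb), hcb⟩
      · -- p+1 joins a 2-bin → 3-bin
        have hi2' : i2 < ((bins0 ++ [[p]]).set i2
            ((p+1) :: (bins0 ++ [[p]])[i2]'hi2)).length := by simpa using hi2
        obtain ⟨b, hb, hqb, hcb⟩ := BFT.fin hI hfrom2 hts2 hinv2 hi2'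
          (q := p+1) (by rw [List.getElem_set_self]; exact List.mem_cons_self)
          (Or.inl (by rw [List.getElem_set_self, List.length_cons, hL2]))
        exact ⟨b, hb, Or.inr (Or.inl hqb), hcb⟩
    · -- p+1 opens a new bin: impossible, it fits with [p]
      exfalso
      have hmem : [p] ∈ bins0 ++ [[p]] := List.mem_append_right _ (by simp)
      have := hnew2 _ hmem
      rw [BFT.binLoad_singleton] at this
      linarith
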